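/- If E is a horizontal self-affine carpet, then every vertical slice of E is porous with constant min{δ,1}/4: for every y₁ ∈ ℝ, every z₂ ∈ V_{y₁}(E), and every t > 0 there exists x₂ ∈ ℝ such that the interval (x₂ − min{δ,1}t/4, x₂ + min{δ,1}t/4) is contained in (z₂ − t, z₂ + t) \ V_{y₁}(E). -/

import Mathlib

open Set Metric Filter Topology

noncomputable section

/-- The Euclidean plane ℝ². -/
abbrev E2 := EuclideanSpace ℝ (Fin 2)

/-- The vertical line {a} × ℝ in ℝ². -/
def vline (a : ℝ) : Set E2 := {x | x 0 = a}

/-- A horizontal self-affine carpet: an IFS of invertible diagonal affine maps on ℝ²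
satisfying (H1), together with its attractor `E` of diameter 1, satisfying the strong
separation condition and the vertical line condition (H2). -/
structure HorizontalCarpet where
  N : ℕ
  hN : 2 ≤ N
  a1 : Fin N → ℝ
  a2 : Fin N → ℝ
  b1 : Fin N → ℝ
  b2 : Fin N → ℝ
  φ : Fin N → E2 → E2
  hφ : ∀ i x, φ i x = ![a1 i * x 0 + b1 i, a2 i * x 1 + b2 i]
  hH1 : ∀ i, 0 < a2 i ∧ a2 i < a1 i ∧ a1 i < 1
  E : Set E2
  hne : E.Nonempty
  hcomp : IsCompact E
  hinv : E = ⋃ i, φ i '' E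
  hdiam : Metric.diam E = 1
  hssc : ∀ i j, i ≠ j → Disjoint (φ i '' E) (φ j '' E)
  hH2 : ∀ a : ℝ, (vline a ∩ convexHull ℝ E).Nonempty →
    ∃ i j : Fin N, i ≠ j ∧ (vline a ∩ φ i '' (convexHull ℝ E)).Nonempty ∧
      (vline a ∩ φ j '' (convexHull ℝ E)).Nonempty

/-- `η : [0,∞) → [0,∞)` is a homeomorphism (expressed for a function `η : ℝ → ℝ`). -/
def IsHomeoOfIci (η : ℝ → ℝ) : Prop :=
  ∃ e : (Set.Ici (0:ℝ)) ≃ₜ (Set.Ici (0:ℝ)), ∀ x : Set.Ici (0:ℝ), (e x : ℝ) = η x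

/-- `f` is η-quasisymmetric. -/
def IsQuasisymmetric {X Y : Type*} [MetricSpace X] [MetricSpace Y] (η : ℝ → ℝ)
    (f : X → Y) : Prop :=
  ∀ x y z : X, x ≠ z →
    dist (f x) (f y) / dist (f x) (f z) ≤ η (dist x y / dist x z)

/-- `δ = min_{i ≠ j} dist(φ_i(E), φ_j(E))`. -/
def sscGap (c : HorizontalCarpet) : ℝ :=
  sInf {d : ℝ | ∃ i j : Fin c.N, i ≠ j ∧
    ∃ x ∈ c.φ i '' c.E, ∃ y ∈ c.φ j '' c.E, d = dist x y}

/-- The vertical slice `V_{y₁}(E) = {x₂ : (y₁,x₂) ∈ E}`. -/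
def vslice (E : Set E2) (y1 : ℝ) : Set ℝ := {x2 : ℝ | (!₂[y1, x2] : E2) ∈ E}

namespace CarpetAux

def vpt (a b : ℝ) : E2 := !₂[a, b]

@[simp] lemma vpt_zero (a b : ℝ) : vpt a b 0 = a := rfl
@[simp] lemma vpt_one (a b : ℝ) : vpt a b 1 = b := rfl

lemma dist_vpt (a b b' : ℝ) : dist (vpt a b) (vpt a b') = |b - b'| := by
  refine (EuclideanSpace.dist_eq _ _).trans ?_
  simp [Fin.sum_univ_two, Real.dist_eq, Real.sqrt_sq_eq_abs, vpt]

lemma vert_le_dist (u v : E2) : |u 1 - v 1| ≤ dist u v := by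
  refine le_of_le_of_eq ?_ (EuclideanSpace.dist_eq u v).symm
  rw [show |u 1 - v 1| = Real.sqrt ((u 1 - v 1)^2) from (Real.sqrt_sq_eq_abs _).symm]
  apply Real.sqrt_le_sqrt
  rw [Fin.sum_univ_two]
  simp only [Real.dist_eq]
  nlinarith [sq_nonneg (u 0 - v 0), sq_abs (u 1 - v 1), sq_abs (u 0 - v 0)]

variable (c : HorizontalCarpet)

lemma phi_vert (i : Fin c.N) (u v : E2) :
    (c.φ i u) 1 - (c.φ i v) 1 = c.a2 i * (u 1 - v 1) := by
  rw [c.hφ, c.hφ]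
  simp
  ring

lemma phi_dist (i : Fin c.N) (u v : E2) :
    c.a2 i * dist u v ≤ dist (c.φ i u) (c.φ i v) := by
  obtain ⟨h2, h21, h11⟩ := c.hH1 i
  have hu := EuclideanSpace.dist_eq u v
  have hw := EuclideanSpace.dist_eq (c.φ i u) (c.φ i v)
  rw [hu, hw]
  rw [show c.a2 i * Real.sqrt (∑ j, dist (u j) (v j) ^ 2)
      = Real.sqrt ((c.a2 i)^2 * ∑ j, dist (u j) (v j) ^ 2) by
    rw [Real.sqrt_mul (sq_nonneg _), Real.sqrt_sq h2.le]]
  apply Real.sqrt_le_sqrt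
  rw [Fin.sum_univ_two, Fin.sum_univ_two, c.hφ, c.hφ]
  simp only [Real.dist_eq, Matrix.cons_val_zero, Matrix.cons_val_one, Matrix.head_cons]
  have e0 : c.a1 i * u 0 + c.b1 i - (c.a1 i * v 0 + c.b1 i) = c.a1 i * (u 0 - v 0) := by ring
  have e1 : c.a2 i * u 1 + c.b2 i - (c.a2 i * v 1 + c.b2 i) = c.a2 i * (u 1 - v 1) := by ring
  rw [e0, e1, abs_mul, abs_mul, abs_of_pos h2, abs_of_pos (h2.trans h21)]
  have hsq : (c.a2 i)^2 ≤ (c.a1 i)^2 := pow_le_pow_left₀ h2.le h21.le 2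
  nlinarith [sq_nonneg (|u 0 - v 0|), hsq, sq_nonneg (|u 1 - v 1|)]

end CarpetAux

namespace CarpetAux
variable (c : HorizontalCarpet)

lemma phi_image_subset (i : Fin c.N) : c.φ i '' c.E ⊆ c.E := by
  conv_rhs => rw [c.hinv]
  exact Set.subset_iUnion (fun j => c.φ j '' c.E) i

lemma exists_decomp {z : E2} (hz : z ∈ c.E) :
    ∃ p : Fin c.N × E2, p.2 ∈ c.E ∧ c.φ p.1 p.2 = z := by
  rw [c.hinv] at hz
  obtain ⟨i, hi⟩ := Set.mem_iUnion.mp hz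
  obtain ⟨u, hu, huz⟩ := hi
  exact ⟨⟨i, u⟩, hu, huz⟩

noncomputable def dec (z : {x : E2 // x ∈ c.E}) : Fin c.N × {x : E2 // x ∈ c.E} :=
  ⟨(Classical.choose (exists_decomp c z.2)).1,
   ⟨(Classical.choose (exists_decomp c z.2)).2, (Classical.choose_spec (exists_decomp c z.2)).1⟩⟩

lemma dec_spec (z : {x : E2 // x ∈ c.E}) : c.φ (dec c z).1 (dec c z).2.1 = z.1 :=
  (Classical.choose_spec (exists_decomp c z.2)).2

noncomputable def seqE (z0 : {x : E2 // x ∈ c.E}) : ℕ → {x : E2 // x ∈ c.E}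
  | 0 => z0
  | n+1 => (dec c (seqE z0 n)).2

noncomputable def ltr (z0 : {x : E2 // x ∈ c.E}) (n : ℕ) : Fin c.N := (dec c (seqE c z0 n)).1

noncomputable def Phi (z0 : {x : E2 // x ∈ c.E}) : ℕ → E2 → E2
  | 0 => id
  | n+1 => Phi z0 n ∘ c.φ (ltr c z0 n)

noncomputable def A2 (z0 : {x : E2 // x ∈ c.E}) : ℕ → ℝ
  | 0 => 1
  | n+1 => A2 z0 n * c.a2 (ltr c z0 n)

variable (z0 : {x : E2 // x ∈ c.E})

lemma A2_pos (n : ℕ) : 0 < A2 c z0 n := by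
  induction n with
  | zero => exact one_pos
  | succ n ih => exact mul_pos ih (c.hH1 _).1

lemma A2_succ_le (n : ℕ) : A2 c z0 (n+1) ≤ A2 c z0 n := by
  have h := (c.hH1 (ltr c z0 n))
  have : c.a2 (ltr c z0 n) ≤ 1 := le_of_lt (h.2.1.trans h.2.2)
  calc A2 c z0 (n+1) = A2 c z0 n * c.a2 (ltr c z0 n) := rfl
    _ ≤ A2 c z0 n * 1 := by
        exact mul_le_mul_of_nonneg_left this (A2_pos c z0 n).le
    _ = A2 c z0 n := mul_one _

lemma A2_anti : ∀ {m n : ℕ}, m ≤ n → A2 c z0 n ≤ A2 c z0 m := by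
  intro m n h
  induction h with
  | refl => exact le_refl _
  | step h ih => exact (A2_succ_le c z0 _).trans ih

lemma Phi_seq (n : ℕ) : Phi c z0 n (seqE c z0 n).1 = z0.1 := by
  induction n with
  | zero => rfl
  | succ n ih =>
    show Phi c z0 n (c.φ (ltr c z0 n) (seqE c z0 (n+1)).1) = z0.1
    rw [show c.φ (ltr c z0 n) (seqE c z0 (n+1)).1 = (seqE c z0 n).1 from dec_spec c _]
    exact ih

lemma Phi_vert (n : ℕ) (u v : E2) :
    (Phi c z0 n u) 1 - (Phi c z0 n v) 1 = A2 c z0 n * (u 1 - v 1) := by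
  induction n generalizing u v with
  | zero => simp [Phi, A2]
  | succ n ih =>
    show (Phi c z0 n (c.φ _ u)) 1 - (Phi c z0 n (c.φ _ v)) 1 = _
    rw [ih, phi_vert]
    show A2 c z0 n * (c.a2 (ltr c z0 n) * (u 1 - v 1)) = A2 c z0 n * c.a2 (ltr c z0 n) * (u 1 - v 1)
    ring

lemma Phi_dist (n : ℕ) (u v : E2) :
    A2 c z0 n * dist u v ≤ dist (Phi c z0 n u) (Phi c z0 n v) := by
  induction n generalizing u v with
  | zero => simp [Phi, A2]
  | succ n ih =>
    show A2 c z0 n * c.a2 (ltr c z0 n) * dist u v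
        ≤ dist (Phi c z0 n (c.φ _ u)) (Phi c z0 n (c.φ _ v))
    calc A2 c z0 n * c.a2 (ltr c z0 n) * dist u v
        = A2 c z0 n * (c.a2 (ltr c z0 n) * dist u v) := by ring
      _ ≤ A2 c z0 n * dist (c.φ (ltr c z0 n) u) (c.φ (ltr c z0 n) v) :=
          mul_le_mul_of_nonneg_left (phi_dist c _ u v) (A2_pos c z0 n).le
      _ ≤ _ := ih _ _

noncomputable def cyl (n : ℕ) : Set E2 := Phi c z0 n '' c.E

lemma cyl_succ (n : ℕ) : cyl c z0 (n+1) = Phi c z0 n '' (c.φ (ltr c z0 n) '' c.E) := by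
  rw [cyl, show Phi c z0 (n+1) = Phi c z0 n ∘ c.φ (ltr c z0 n) from rfl, Set.image_comp]

lemma cyl_succ_subset (n : ℕ) : cyl c z0 (n+1) ⊆ cyl c z0 n := by
  rw [cyl_succ]
  exact Set.image_mono (phi_image_subset c _)

lemma mem_cyl (n : ℕ) : z0.1 ∈ cyl c z0 n :=
  ⟨(seqE c z0 n).1, (seqE c z0 n).2, Phi_seq c z0 n⟩

lemma sscGap_le {i j : Fin c.N} (hij : i ≠ j) {x y : E2}
    (hx : x ∈ c.φ i '' c.E) (hy : y ∈ c.φ j '' c.E) : sscGap c ≤ dist x y := by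
  apply csInf_le
  · refine ⟨0, fun d hd => ?_⟩
    obtain ⟨_, _, _, _, _, _, _, rfl⟩ := hd
    exact dist_nonneg
  · exact ⟨i, j, hij, x, hx, y, hy, rfl⟩

lemma split_dist (hδ : 0 ≤ sscGap c) : ∀ (n : ℕ) {q p : E2}, q ∈ c.E → q ∉ cyl c z0 (n+1) →
    p ∈ cyl c z0 (n+1) → sscGap c * A2 c z0 n ≤ dist q p := by
  intro n
  induction n with
  | zero =>
    intro q p hq hqn hp
    have hq' : q ∈ ⋃ i, c.φ i '' c.E := by rw [← c.hinv]; exact hq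
    obtain ⟨k, hk⟩ := Set.mem_iUnion.mp hq'
    have hc1 : cyl c z0 1 = c.φ (ltr c z0 0) '' c.E := by
      rw [cyl_succ]; simp [Phi]
    rw [hc1] at hp hqn
    have hkne : k ≠ ltr c z0 0 := fun h => hqn (h ▸ hk)
    have := sscGap_le c hkne hk hp
    simpa [A2] using this
  | succ n ih =>
    intro q p hq hqn hp
    by_cases hqc : q ∈ cyl c z0 (n+1)
    · obtain ⟨u, hu, huq⟩ := hqc
      rw [cyl_succ] at hp
      obtain ⟨p', hp', hpp⟩ := hp
      have hu' : u ∈ ⋃ i, c.φ i '' c.E := by rw [← c.hinv]; exact hu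
      obtain ⟨k, hk⟩ := Set.mem_iUnion.mp hu'
      have hkne : k ≠ ltr c z0 (n+1) := by
        intro h
        apply hqn
        rw [cyl_succ]
        exact ⟨u, h ▸ hk, huq⟩
      calc sscGap c * A2 c z0 (n+1) ≤ A2 c z0 (n+1) * dist u p' := by
            rw [mul_comm]
            exact mul_le_mul_of_nonneg_left (sscGap_le c hkne hk hp') (A2_pos c z0 (n+1)).le
        _ ≤ dist (Phi c z0 (n+1) u) (Phi c z0 (n+1) p') := Phi_dist c z0 (n+1) u p'
        _ = dist q p := by rw [huq, hpp]
    · have := ih hq hqc (cyl_succ_subset c z0 (n+1) hp)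
      calc sscGap c * A2 c z0 (n+1) ≤ sscGap c * A2 c z0 n :=
            mul_le_mul_of_nonneg_left (A2_succ_le c z0 n) hδ
        _ ≤ dist q p := this

end CarpetAux

namespace CarpetAux
variable (c : HorizontalCarpet) (z0 : {x : E2 // x ∈ c.E})

lemma exists_A2_le {ε : ℝ} (hε : 0 < ε) : ∃ n, A2 c z0 n ≤ ε := by
  have hNE : (Finset.univ : Finset (Fin c.N)).Nonempty := by
    have hpos : 0 < c.N := lt_of_lt_of_le two_pos c.hN
    have : Nonempty (Fin c.N) := ⟨⟨0, hpos⟩⟩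
    exact Finset.univ_nonempty
  set r := Finset.univ.sup' hNE c.a2 with hr
  have hrlt : r < 1 := by
    rw [Finset.sup'_lt_iff]
    intro i _
    have h := c.hH1 i
    exact h.2.1.trans h.2.2
  have hr0 : 0 ≤ r := by
    obtain ⟨i, hi⟩ := hNE
    exact le_trans (c.hH1 i).1.le (Finset.le_sup' c.a2 hi)
  have hA2r : ∀ n, A2 c z0 n ≤ r ^ n := by
    intro n
    induction n with
    | zero => simp [A2]
    | succ n ih =>
      calc A2 c z0 (n+1) = A2 c z0 n * c.a2 (ltr c z0 n) := rfl
        _ ≤ r ^ n * r := by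
            apply mul_le_mul ih (Finset.le_sup' c.a2 (Finset.mem_univ _)) (c.hH1 _).1.le
            exact pow_nonneg hr0 n
        _ = r ^ (n+1) := by ring
  obtain ⟨n, hn⟩ := exists_pow_lt_of_lt_one hε hrlt
  exact ⟨n, (hA2r n).trans hn.le⟩

lemma vert_extent {u v : E2} (hu : u ∈ c.E) (hv : v ∈ c.E) : |u 1 - v 1| ≤ 1 := by
  calc |u 1 - v 1| ≤ dist u v := vert_le_dist u v
    _ ≤ Metric.diam c.E := dist_le_diam_of_mem c.hcomp.isBounded hu hv
    _ = 1 := c.hdiam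

end CarpetAux

open CarpetAux in
/-- Lemma 5.4 (porosity part): every vertical slice of a horizontal self-affine carpet
is porous with constant `min{δ,1}/4`. -/
theorem statement11 (c : HorizontalCarpet) (y1 z2 : ℝ) (hz : z2 ∈ vslice c.E y1)
    (t : ℝ) (ht : 0 < t) :
    ∃ x2 : ℝ, Set.Ioo (x2 - min (sscGap c) 1 * t / 4) (x2 + min (sscGap c) 1 * t / 4) ⊆
      Set.Ioo (z2 - t) (z2 + t) \ vslice c.E y1 := by
  classical
  set δ' := min (sscGap c) 1 with hδ'def
  by_cases hδpos : 0 < δ'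
  case neg =>
    push_neg at hδpos
    refine ⟨0, fun q hq => ?_⟩
    exfalso
    have h1 := hq.1
    have h2 := hq.2
    have h3 : δ' * t / 4 ≤ 0 := by nlinarith
    linarith
  have hδ1 : δ' ≤ 1 := min_le_right _ _
  have hδle : δ' ≤ sscGap c := min_le_left _ _
  have hgap : 0 < sscGap c := lt_of_lt_of_le hδpos hδle
  by_cases ht2 : 2 ≤ t
  case pos =>
    refine ⟨z2 + 1 + t/4, fun q hq => ?_⟩
    have he : δ' * t / 4 ≤ t / 4 := by nlinarith
    have hq1 : z2 + 1 < q := by have := hq.1; linarith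
    have hq2 : q < z2 + 1 + t/2 := by have := hq.2; linarith
    refine ⟨⟨by linarith, by linarith⟩, fun hqs => ?_⟩
    have hd : dist (vpt y1 q) (vpt y1 z2) ≤ 1 := by
      calc dist (vpt y1 q) (vpt y1 z2) ≤ Metric.diam c.E :=
            dist_le_diam_of_mem c.hcomp.isBounded hqs hz
        _ = 1 := c.hdiam
    rw [dist_vpt] at hd
    have : q - z2 ≤ |q - z2| := le_abs_self _
    linarith
  push_neg at ht2
  set z0 : {x : E2 // x ∈ c.E} := ⟨vpt y1 z2, hz⟩ with hz0def
  have ht2' : (0:ℝ) < t/2 := by linarith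
  have hex : ∃ n, A2 c z0 n ≤ t/2 := exists_A2_le c z0 ht2'
  set n := Nat.find hex with hndef
  have hn : A2 c z0 n ≤ t/2 := Nat.find_spec hex
  have hn0 : n ≠ 0 := by
    intro h
    rw [h] at hn
    have : A2 c z0 0 = 1 := rfl
    rw [this] at hn
    linarith
  obtain ⟨m, hm⟩ : ∃ m, n = m + 1 := ⟨n - 1, (Nat.succ_pred_eq_of_pos (Nat.pos_of_ne_zero hn0)).symm⟩
  have hA2m : t/2 < A2 c z0 m := by
    have := Nat.find_min hex (m := m) (by omega)
    linarith [not_le.mp this]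
  rw [hm] at hn
  set S : Set ℝ := {p : ℝ | vpt y1 p ∈ cyl c z0 (m+1)} with hSdef
  have hz2S : z2 ∈ S := mem_cyl c z0 (m+1)
  have hSbound : ∀ p ∈ S, |p - z2| ≤ t/2 := by
    intro p hp
    obtain ⟨u, hu, hup⟩ := hp
    have hvz : Phi c z0 (m+1) (seqE c z0 (m+1)).1 = vpt y1 z2 := Phi_seq c z0 (m+1)
    have hv1 : (vpt y1 p) 1 - (vpt y1 z2) 1 = A2 c z0 (m+1) * (u 1 - (seqE c z0 (m+1)).1 1) := by
      rw [← hup, ← hvz]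
      exact Phi_vert c z0 (m+1) u _
    have : p - z2 = A2 c z0 (m+1) * (u 1 - (seqE c z0 (m+1)).1 1) := by
      simpa using hv1
    rw [this, abs_mul, abs_of_pos (A2_pos c z0 (m+1))]
    calc A2 c z0 (m+1) * |u 1 - (seqE c z0 (m+1)).1 1|
        ≤ A2 c z0 (m+1) * 1 :=
          mul_le_mul_of_nonneg_left (vert_extent c hu (seqE c z0 (m+1)).2) (A2_pos c z0 (m+1)).le
      _ = A2 c z0 (m+1) := mul_one _
      _ ≤ t/2 := hn
  have hSbdd : BddAbove S := by
    refine ⟨z2 + t/2, fun p hp => ?_⟩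
    have h1 := hSbound p hp
    have h2 : p - z2 ≤ |p - z2| := le_abs_self _
    linarith
  set s := sSup S with hsdef
  have hz2s : z2 ≤ s := le_csSup hSbdd hz2S
  have hs : s ≤ z2 + t/2 := csSup_le ⟨z2, hz2S⟩ (fun p hp => by
    have h1 := hSbound p hp
    have h2 : p - z2 ≤ |p - z2| := le_abs_self _
    linarith)
  refine ⟨s + δ' * t / 4, fun q hq => ?_⟩
  have hq1 : s < q := by have := hq.1; linarith
  have hq2 : q < s + δ' * t / 2 := by have := hq.2; linarith
  have hδt2 : δ' * t / 2 ≤ t / 2 := by nlinarith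
  refine ⟨⟨by linarith, by linarith⟩, fun hqE => ?_⟩
  have hqS : q ∉ S := fun h => absurd (le_csSup hSbdd h) (not_le.mpr hq1)
  obtain ⟨p, hpS, hps⟩ : ∃ p ∈ S, q - δ' * t / 2 < p := by
    have : q - δ' * t / 2 < s := by linarith
    obtain ⟨p, hpS, hp⟩ := exists_lt_of_lt_csSup ⟨z2, hz2S⟩ this
    exact ⟨p, hpS, hp⟩
  have hpc : p ≤ s := le_csSup hSbdd hpS
  have hsep : sscGap c * A2 c z0 m ≤ dist (vpt y1 q) (vpt y1 p) :=
    split_dist c z0 hgap.le m hqE hqS hpS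
  rw [dist_vpt] at hsep
  have habs : |q - p| = q - p := abs_of_pos (by linarith)
  rw [habs] at hsep
  have h1 : δ' * t / 2 ≤ sscGap c * (t/2) := by nlinarith
  have h2 : sscGap c * (t/2) < sscGap c * A2 c z0 m :=
    mul_lt_mul_of_pos_left hA2m hgap
  linarith
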